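/- Let g : ℝⁿ → ℝ be differentiable, let h : ℝⁿ → ℝ be convex, and set φ := g − h. Fix x₀ ∈ ℝⁿ and let 𝓛(x₀) denote the connected component containing x₀ of the sublevel set {x ∈ ℝⁿ : φ(x) ≤ φ(x₀)}. Assume ∇g is Lipschitz with constant L > 0 on 𝓛(x₀), and let x̄ ∈ 𝓛(x₀) satisfy φ(x) ≥ φ(x̄) for all x ∈ 𝓛(x₀). Let v₁ be a subgradient of h at x₀ that maximizes ‖∇g(x₀) − v‖ over all subgradients v of h at x₀, and set σ₁ := ‖∇g(x₀) − v₁‖. Assume additionally that σ₁ > 0, that q ∈ (0, 1/2), M > 0, and that the PLK-type inequality σ₁ ≥ M·(φ(x₀) − φ(x̄))^q holds. Then σ₁^{1−2q} ≥ M/(2L)^q. -/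

import Mathlib

open RealInnerProductSpace Topology Filter

/-- The key estimate in the proof of the inconsistency Theorem 6.2:
under the PLK-type inequality with lower exponent at a global minimizer of a
difference program over a level-set component, the stationarity measure σ₁
satisfies σ₁^(1-2q) ≥ M/(2L)^q. -/
theorem PLK_lower_exponent_key_estimate
    (n : ℕ) (g h : EuclideanSpace ℝ (Fin n) → ℝ)
    (hg : Differentiable ℝ g)
    (hh : ConvexOn ℝ Set.univ h)
    (φ : EuclideanSpace ℝ (Fin n) → ℝ) (hφ : φ = fun z => g z - h z)
    (x₀ : EuclideanSpace ℝ (Fin n))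
    (L : ℝ) (hL : 0 < L)
    (hLip : ∀ y ∈ connectedComponentIn {z | φ z ≤ φ x₀} x₀,
      ∀ z ∈ connectedComponentIn {z | φ z ≤ φ x₀} x₀,
        ‖gradient g y - gradient g z‖ ≤ L * ‖y - z‖)
    (xbar : EuclideanSpace ℝ (Fin n))
    (hxbar : xbar ∈ connectedComponentIn {z | φ z ≤ φ x₀} x₀)
    (hmin : ∀ y ∈ connectedComponentIn {z | φ z ≤ φ x₀} x₀, φ xbar ≤ φ y)
    (v₁ : EuclideanSpace ℝ (Fin n))
    (hv₁ : ∀ y, h x₀ + ⟪v₁, y - x₀⟫ ≤ h y)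
    (hmax : ∀ v : EuclideanSpace ℝ (Fin n),
      (∀ y, h x₀ + ⟪v, y - x₀⟫ ≤ h y) →
        ‖gradient g x₀ - v‖ ≤ ‖gradient g x₀ - v₁‖)
    (hσpos : 0 < ‖gradient g x₀ - v₁‖)
    (q : ℝ) (hq : q ∈ Set.Ioo (0 : ℝ) (1/2))
    (M : ℝ) (hM : 0 < M)
    (hPLK : M * (φ x₀ - φ xbar) ^ q ≤ ‖gradient g x₀ - v₁‖) :
    M / (2 * L) ^ q ≤ ‖gradient g x₀ - v₁‖ ^ (1 - 2 * q) := by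
  classical
  set d : EuclideanSpace ℝ (Fin n) := gradient g x₀ - v₁ with hd
  set σ : ℝ := ‖d‖ with hσ
  set K : Set (EuclideanSpace ℝ (Fin n)) :=
    connectedComponentIn {z | φ z ≤ φ x₀} x₀ with hKdef
  set ψ : ℝ → ℝ := fun s => g (x₀ - s • d) - h x₀ + s * ⟪v₁, d⟫ with hψdef
  set χ : ℝ → ℝ := fun s => φ x₀ - σ ^ 2 * s + L * σ ^ 2 * s ^ 2 / 2 with hχdef
  have hσ0 : (0:ℝ) ≤ σ := norm_nonneg _
  have hx₀K : x₀ ∈ K := mem_connectedComponentIn (by simp)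
  -- ψ dominates φ along the ray
  have hφle : ∀ s : ℝ, φ (x₀ - s • d) ≤ ψ s := by
    intro s
    have h1 := hv₁ (x₀ - s • d)
    have h2 : ⟪v₁, (x₀ - s • d) - x₀⟫ = -(s * ⟪v₁, d⟫) := by
      rw [sub_sub_cancel_left, inner_neg_right, real_inner_smul_right]
    rw [hφ]
    simp only [hψdef]
    rw [h2] at h1
    linarith
  -- derivative of ψ
  have hcont : Continuous fun s : ℝ => x₀ - s • d := by
    exact continuous_const.sub (continuous_id.smul continuous_const)
  have hcder : ∀ s : ℝ, HasDerivAt (fun t : ℝ => x₀ - t • d) (-d) s := by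
    intro s
    have h1 : HasDerivAt (fun t : ℝ => t • d) d s := by
      simpa using (hasDerivAt_id s).smul_const d
    simpa using h1.const_sub x₀
  have hψd : ∀ s : ℝ,
      HasDerivAt ψ (⟪gradient g (x₀ - s • d), -d⟫ + ⟪v₁, d⟫) s := by
    intro s
    have hgc :
        HasDerivAt (fun t : ℝ => g (x₀ - t • d))
          ((InnerProductSpace.toDual ℝ _ (gradient g (x₀ - s • d))) (-d)) s :=
      ((hg (x₀ - s • d)).hasGradientAt.hasFDerivAt).comp_hasDerivAt s (hcder s)
    rw [InnerProductSpace.toDual_apply_apply] at hgc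
    have h2 := (hgc.sub_const (h x₀)).add ((hasDerivAt_id s).mul_const ⟪v₁, d⟫)
    simp only [id_eq, one_mul] at h2
    exact h2
  -- bound on the derivative of ψ on the component
  have hψ'le : ∀ s : ℝ, 0 ≤ s → (x₀ - s • d) ∈ K →
      ⟪gradient g (x₀ - s • d), -d⟫ + ⟪v₁, d⟫ ≤ -σ ^ 2 + L * σ ^ 2 * s := by
    intro s hs hmemK
    have hlip := hLip _ hmemK _ hx₀K
    have hnorm : ‖(x₀ - s • d) - x₀‖ = s * σ := by
      rw [sub_sub_cancel_left, norm_neg, norm_smul, Real.norm_eq_abs, abs_of_nonneg hs]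
    rw [hnorm] at hlip
    have h1 : ⟪gradient g (x₀ - s • d), -d⟫ + ⟪v₁, d⟫ =
        -⟪d, d⟫ - ⟪gradient g (x₀ - s • d) - gradient g x₀, d⟫ := by
      simp only [inner_neg_right, inner_sub_left, hd]
      ring
    have h2 : ⟪d, d⟫ = σ ^ 2 := real_inner_self_eq_norm_sq d
    have h3 := abs_real_inner_le_norm (gradient g (x₀ - s • d) - gradient g x₀) d
    have h4 := neg_abs_le ⟪gradient g (x₀ - s • d) - gradient g x₀, d⟫
    rw [h1, h2]
    nlinarith [norm_nonneg (gradient g (x₀ - s • d) - gradient g x₀)]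
  -- derivative of χ
  have hχd : ∀ s : ℝ, HasDerivAt χ (-σ ^ 2 + L * σ ^ 2 * s) s := by
    intro s
    have ha : HasDerivAt (fun s : ℝ => s) 1 s := hasDerivAt_id s
    have hb : HasDerivAt (fun s : ℝ => s ^ 2) (2 * s) s := by
      simpa using hasDerivAt_pow 2 s
    have hc := ((ha.const_mul (σ ^ 2)).const_sub (φ x₀)).add
      ((hb.const_mul (L * σ ^ 2)).div_const 2)
    have : HasDerivAt χ (-(σ ^ 2 * 1) + L * σ ^ 2 * (2 * s) / 2) s := by
      simpa only [hχdef, Pi.add_def] using hc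
    convert this using 1
    ring
  -- membership in the component from sublevel bounds
  have hmem : ∀ t : ℝ, 0 ≤ t →
      (∀ s : ℝ, 0 ≤ s → s ≤ t → φ (x₀ - s • d) ≤ φ x₀) →
      ∀ s : ℝ, 0 ≤ s → s ≤ t → (x₀ - s • d) ∈ K := by
    intro t ht hsub s hs0 hst
    have himg : (fun s : ℝ => x₀ - s • d) '' Set.Icc 0 t ⊆ K := by
      apply IsPreconnected.subset_connectedComponentIn
      · exact isPreconnected_Icc.image _ hcont.continuousOn
      · exact ⟨0, ⟨le_refl 0, ht⟩, by simp⟩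
      · rintro _ ⟨u, hu, rfl⟩
        exact hsub u hu.1 hu.2
    exact himg ⟨s, ⟨hs0, hst⟩, rfl⟩
  -- mean value comparison: ψ ≤ χ
  have hMVT : ∀ t : ℝ, 0 ≤ t →
      (∀ s : ℝ, 0 ≤ s → s < t → (x₀ - s • d) ∈ K) → ψ t ≤ χ t := by
    intro t ht hK'
    have hF : ∀ s : ℝ, HasDerivAt (fun s => χ s - ψ s)
        ((-σ ^ 2 + L * σ ^ 2 * s) - (⟪gradient g (x₀ - s • d), -d⟫ + ⟪v₁, d⟫)) s :=
      fun s => (hχd s).sub (hψd s)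
    have hFdiff : Differentiable ℝ (fun s => χ s - ψ s) :=
      fun s => (hF s).differentiableAt
    have hmono : MonotoneOn (fun s => χ s - ψ s) (Set.Icc 0 t) := by
      apply monotoneOn_of_deriv_nonneg (convex_Icc 0 t)
        hFdiff.continuous.continuousOn hFdiff.differentiableOn
      intro s hs
      rw [interior_Icc] at hs
      rw [(hF s).deriv]
      have := hψ'le s hs.1.le (hK' s hs.1.le hs.2)
      linarith
    have h0 : (0:ℝ) ∈ Set.Icc 0 t := ⟨le_refl 0, ht⟩
    have hT : t ∈ Set.Icc 0 t := ⟨ht, le_refl t⟩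
    have hle := hmono h0 hT ht
    simp only at hle
    have hzero : χ 0 - ψ 0 = 0 := by
      simp [hψdef, hχdef, hφ]
    linarith
  -- χ t ≤ φ x₀ on [0, 1/L]
  have hχle : ∀ t : ℝ, 0 ≤ t → t ≤ 1 / L → χ t ≤ φ x₀ := by
    intro t ht0 ht1
    have hLt : L * t ≤ 1 := by
      rw [le_div_iff₀ hL] at ht1
      linarith
    simp only [hχdef]
    nlinarith [sq_nonneg σ, mul_nonneg (sq_nonneg σ) ht0]
  -- the set of good times
  set A : Set ℝ := {t : ℝ | t ∈ Set.Icc 0 (1/L) ∧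
      ∀ s : ℝ, 0 ≤ s → s ≤ t → φ (x₀ - s • d) ≤ φ x₀} with hAdef
  have hA0 : (0:ℝ) ∈ A := by
    refine ⟨⟨le_refl 0, by positivity⟩, ?_⟩
    intro s hs0 hs1
    have : s = 0 := le_antisymm hs1 hs0
    simp [this]
  have hAne : A.Nonempty := ⟨0, hA0⟩
  have hAbdd : BddAbove A := ⟨1/L, fun t htA => htA.1.2⟩
  set t₁ : ℝ := sSup A with ht₁def
  have ht₁0 : 0 ≤ t₁ := le_csSup hAbdd hA0
  have ht₁T : t₁ ≤ 1 / L := csSup_le hAne (fun t htA => htA.1.2)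
  -- property P holds at t₁
  have hPt₁ : ∀ s : ℝ, 0 ≤ s → s ≤ t₁ → φ (x₀ - s • d) ≤ φ x₀ := by
    have hlt : ∀ s : ℝ, 0 ≤ s → s < t₁ → φ (x₀ - s • d) ≤ φ x₀ := by
      intro s hs0 hst
      obtain ⟨t, htA, hst'⟩ := exists_lt_of_lt_csSup hAne hst
      exact htA.2 s hs0 hst'.le
    intro s hs0 hst
    rcases lt_or_eq_of_le hst with hlt' | heq
    · exact hlt s hs0 hlt'
    · -- s = t₁ : use the MVT bound
      have hKm : ∀ u : ℝ, 0 ≤ u → u < s → (x₀ - u • d) ∈ K := by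
        intro u hu0 hus
        exact hmem u hu0
          (fun w hw0 hwu => hlt w hw0 (lt_of_lt_of_le (lt_of_le_of_lt hwu hus) hst))
          u hu0 le_rfl
      have h1 := hMVT s hs0 hKm
      have h2 := hχle s hs0 (le_trans hst ht₁T)
      exact le_trans (hφle s) (le_trans h1 h2)
  -- t₁ = 1/L (otherwise we could go further)
  have ht₁eq : t₁ = 1 / L := by
    by_contra hne
    have ht₁lt : t₁ < 1 / L := lt_of_le_of_ne ht₁T hne
    have hKmem : ∀ u : ℝ, 0 ≤ u → u ≤ t₁ → (x₀ - u • d) ∈ K :=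
      hmem t₁ ht₁0 hPt₁
    have hψt₁ : ψ t₁ ≤ φ x₀ := by
      have := hMVT t₁ ht₁0 (fun u hu0 hu1 => hKmem u hu0 hu1.le)
      exact le_trans this (hχle t₁ ht₁0 ht₁T)
    -- the derivative of ψ at t₁ is negative
    have hρneg : ⟪gradient g (x₀ - t₁ • d), -d⟫ + ⟪v₁, d⟫ < 0 := by
      have h1 := hψ'le t₁ ht₁0 (hKmem t₁ ht₁0 le_rfl)
      have hσ2 : 0 < σ ^ 2 := by positivity
      have : L * t₁ < 1 := by
        rw [lt_div_iff₀ hL] at ht₁lt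
        linarith
      nlinarith
    have hslope := hasDerivAt_iff_tendsto_slope.mp (hψd t₁)
    have hmono : 𝓝[>] t₁ ≤ 𝓝[≠] t₁ :=
      nhdsWithin_mono _ (fun x hx => ne_of_gt hx)
    have hev : ∀ᶠ s in 𝓝[>] t₁, slope ψ t₁ s < 0 :=
      (hslope.mono_left hmono).eventually_lt_const hρneg
    obtain ⟨b, hb, hIoc⟩ := mem_nhdsGT_iff_exists_Ioc_subset.mp hev
    have hblt : t₁ < b := hb
    set t₂ : ℝ := min b (1/L) with ht₂def
    have ht₂gt : t₁ < t₂ := lt_min hblt ht₁lt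
    have ht₂A : t₂ ∈ A := by
      refine ⟨⟨le_trans ht₁0 ht₂gt.le, min_le_right _ _⟩, ?_⟩
      intro s hs0 hst₂
      rcases le_or_gt s t₁ with hs1 | hs1
      · exact hPt₁ s hs0 hs1
      · have hsIoc : s ∈ Set.Ioc t₁ b := ⟨hs1, le_trans hst₂ (min_le_left _ _)⟩
        have hsl := hIoc hsIoc
        rw [Set.mem_setOf_eq, slope_def_field] at hsl
        have hspos : 0 < s - t₁ := by linarith
        have hψs : ψ s < ψ t₁ := by
          have := (div_neg_iff.mp hsl)
          rcases this with ⟨h1, h2⟩ | ⟨h1, h2⟩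
          · linarith
          · linarith
        exact le_trans (hφle s) (by linarith)
    have := le_csSup hAbdd ht₂A
    rw [← ht₁def] at this
    linarith
  -- key estimate: φ x₀ - φ xbar ≥ σ²/(2L)
  rw [ht₁eq] at hPt₁ ht₁0
  have hKmem : (x₀ - (1/L) • d) ∈ K :=
    hmem (1/L) ht₁0 hPt₁ (1/L) ht₁0 le_rfl
  have hχval : χ (1/L) = φ x₀ - σ ^ 2 / (2 * L) := by
    simp only [hχdef]
    field_simp
    ring
  have hψval : ψ (1/L) ≤ χ (1/L) :=
    hMVT (1/L) ht₁0 (fun u hu0 hu1 => hmem (1/L) ht₁0 hPt₁ u hu0 hu1.le)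
  have key : σ ^ 2 / (2 * L) ≤ φ x₀ - φ xbar := by
    have h1 := hmin _ hKmem
    have h2 := hφle (1/L)
    rw [hχval] at hψval
    linarith
  -- final algebra
  have h2L : (0:ℝ) < 2 * L := by linarith
  have hrpow : M * ((σ ^ 2 / (2 * L)) ^ q) ≤ σ := by
    refine le_trans ?_ hPLK
    have := Real.rpow_le_rpow (by positivity) key hq.1.le
    exact mul_le_mul_of_nonneg_left this hM.le
  have heq : ((σ ^ 2 / (2 * L)) : ℝ) ^ q = σ ^ (2 * q) / (2 * L) ^ q := by
    rw [Real.div_rpow (sq_nonneg σ) h2L.le]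
    congr 1
    rw [show ((σ ^ 2 : ℝ)) = σ ^ ((2:ℕ):ℝ) by rw [Real.rpow_natCast],
      ← Real.rpow_mul hσ0]
    norm_num
  rw [heq] at hrpow
  have hApos : (0:ℝ) < (2 * L) ^ q := Real.rpow_pos_of_pos h2L q
  have hBpos : (0:ℝ) < σ ^ (2 * q) := Real.rpow_pos_of_pos hσpos _
  rw [show (1 - 2*q : ℝ) = 1 - 2*q from rfl, Real.rpow_sub hσpos, Real.rpow_one,
    div_le_div_iff₀ hApos hBpos]
  calc M * σ ^ (2*q) = (M * (σ ^ (2*q) / (2*L)^q)) * (2*L)^q := by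
        field_simp
    _ ≤ σ * (2*L)^q := by
        exact mul_le_mul_of_nonneg_right hrpow hApos.le
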